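/- Let f : {0,1}^n → ℝ be an affine function f(x) = c + Σ_i c_i x_i. If two coefficients c_i and c_j (with i ≠ j) are both nonzero, then Pr[f(x) ∉ {0,1}] ≥ 1/4 over a uniformly random x ∈ {0,1}^n. -/
import Mathlib


open scoped Classical
set_option maxHeartbeats 1000000

theorem stmt2 (n : ℕ) (c : ℝ) (cc : Fin n → ℝ)
    (f : (Fin n → Bool) → ℝ)
    (hf : ∀ x, f x = c + ∑ i, cc i * (if x i then (1:ℝ) else 0))
    (i j : Fin n) (hij : i ≠ j) (hi : cc i ≠ 0) (hj : cc j ≠ 0) :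
    (1 : ℝ) / 4 ≤
      ((Finset.univ.filter fun x : Fin n → Bool => f x ≠ 0 ∧ f x ≠ 1).card : ℝ) / 2 ^ n := by
  have diff : ∀ (y : Fin n → Bool) (k : Fin n) (b : Bool),
      f (Function.update y k b)
        = f y + cc k * ((if b then (1:ℝ) else 0) - (if y k then (1:ℝ) else 0)) := by
    intro y k b
    rw [hf, hf]
    have h : (∑ m, cc m * (if Function.update y k b m then (1:ℝ) else 0))
        - ∑ m, cc m * (if y m then (1:ℝ) else 0)
        = cc k * ((if b then (1:ℝ) else 0) - (if y k then (1:ℝ) else 0)) := by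
      rw [← Finset.sum_sub_distrib, Finset.sum_eq_single k]
      · simp only [Function.update_self]; ring
      · intro m _ hm
        simp [Function.update_of_ne hm]
      · simp
    linarith [h]
  set upd : (Fin n → Bool) → Bool → Bool → (Fin n → Bool) :=
    fun x b1 b2 => Function.update (Function.update x i b1) j b2 with hupd
  have key : ∀ x : Fin n → Bool, ∃ b : Bool × Bool,
      f (upd x b.1 b.2) ≠ 0 ∧ f (upd x b.1 b.2) ≠ 1 := by
    intro x
    by_contra h
    push_neg at h
    have hmem : ∀ b1 b2 : Bool, f (upd x b1 b2) = 0 ∨ f (upd x b1 b2) = 1 := by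
      intro b1 b2
      exact or_iff_not_imp_left.mpr (h (b1, b2))
    have h2 : ∀ b1 : Bool, f (upd x b1 true) = f (upd x b1 false) + cc j := by
      intro b1
      have e1 : upd x b1 true = Function.update (upd x b1 false) j true := by
        simp [hupd, Function.update_idem]
      have e2 : (upd x b1 false) j = false := by simp [hupd]
      rw [e1, diff, e2]; norm_num
    have h1 : ∀ b2 : Bool, f (upd x true b2) = f (upd x false b2) + cc i := by
      intro b2
      have e1 : upd x true b2 = Function.update (upd x false b2) i true := by
        funext k
        simp only [hupd, Function.update_apply]
        by_cases hki : k = i <;> by_cases hkj : k = j <;> simp_all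
      have e2 : (upd x false b2) i = false := by
        simp [hupd, Function.update_of_ne hij]
      rw [e1, diff, e2]; norm_num
    have hff := hmem false false
    have htf := hmem true false
    have hft := hmem false true
    have htt := hmem true true
    rw [h1 false] at htf
    rw [h2 false] at hft
    rw [h1 true, h2 false] at htt
    rcases hff with hff|hff <;> rcases htf with htf|htf <;> rcases hft with hft|hft <;>
      rcases htt with htt|htt <;>
      first
        | exact hi (by linarith)
        | exact hj (by linarith)
        | linarith
  let ψ : (Fin n → Bool) → (Fin n → Bool) := fun x => upd x (key x).choose.1 (key x).choose.2
  have himg : Finset.univ.image ψ ⊆ Finset.univ.filter fun x => f x ≠ 0 ∧ f x ≠ 1 := by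
    intro a ha
    rw [Finset.mem_image] at ha
    obtain ⟨x, -, rfl⟩ := ha
    simpa [ψ] using (key x).choose_spec
  have hfiber : ∀ a ∈ Finset.univ.image ψ,
      (Finset.univ.filter fun x => ψ x = a).card ≤ 4 := by
    intro a _
    have hle : (Finset.univ.filter fun x => ψ x = a).card
        ≤ (Finset.univ : Finset (Bool × Bool)).card := by
      apply Finset.card_le_card_of_injOn (fun x => (x i, x j))
      · intro x _; exact Finset.mem_univ _
      · intro x hx y hy hxy
        rw [Finset.mem_coe, Finset.mem_filter] at hx hy
        funext k
        by_cases hki : k = i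
        · subst hki; exact congrArg Prod.fst hxy
        by_cases hkj : k = j
        · subst hkj; exact congrArg Prod.snd hxy
        · have ex : ψ x k = x k := by
            simp [ψ, hupd, Function.update_of_ne hkj, Function.update_of_ne hki]
          have ey : ψ y k = y k := by
            simp [ψ, hupd, Function.update_of_ne hkj, Function.update_of_ne hki]
          rw [← ex, ← ey, hx.2, hy.2]
    have h4 : (Finset.univ : Finset (Bool × Bool)).card = 4 := by decide
    omega
  have hcount : 2 ^ n ≤ 4 * (Finset.univ.filter fun x : Fin n → Bool => f x ≠ 0 ∧ f x ≠ 1).card := by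
    have h1 : (Finset.univ : Finset (Fin n → Bool)).card ≤ 4 * (Finset.univ.image ψ).card :=
      Finset.card_le_mul_card_image _ 4 hfiber
    have h2 := Finset.card_le_card himg
    have h3 : (Finset.univ : Finset (Fin n → Bool)).card = 2 ^ n := by
      rw [Finset.card_univ, Fintype.card_fun, Fintype.card_bool, Fintype.card_fin]
    omega
  rw [le_div_iff₀ (by positivity)]
  have hcast : (2:ℝ) ^ n
      ≤ 4 * ((Finset.univ.filter fun x : Fin n → Bool => f x ≠ 0 ∧ f x ≠ 1).card : ℝ) := by
    exact_mod_cast hcount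
  linarith
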